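/- Let s > 1/2, b > 1/2 and e ∈ {−1, +1}. Then there is a constant c > 0 such that for all nonnegative functions f, g, h ∈ L²(ℝ²): ∫∫∫∫_{ℝ⁴} f(ξ₁,τ₁) g(ξ₂,τ₂) h(ξ₁+ξ₂, τ₁+τ₂) · ⟨ξ₁⟩^{−s} · ⟨τ₁+τ₂ + e|ξ₁+ξ₂|⟩^{−b} dξ₁ dτ₁ dξ₂ dτ₂ ≤ c ‖f‖_{L²} ‖g‖_{L²} ‖h‖_{L²}. -/

import Mathlib

open MeasureTheory ENNReal

/-- Japanese bracket `⟨x⟩ = (1 + |x|²)^{1/2}`. -/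
noncomputable def jb (x : ℝ) : ℝ := Real.sqrt (1 + x ^ 2)

lemma jb_pos (x : ℝ) : 0 < jb x := Real.sqrt_pos.2 (by positivity)

noncomputable def W (r x : ℝ) : ℝ≥0∞ := ENNReal.ofReal (jb x ^ (-r))

lemma measurable_W (r : ℝ) : Measurable (W r) := by
  have hjb : Continuous jb := Real.continuous_sqrt.comp (by continuity)
  have : Continuous fun x => jb x ^ (-r) :=
    hjb.rpow_const fun x => Or.inl (jb_pos x).ne'
  exact (ENNReal.continuous_ofReal.comp this).measurable

lemma W_sq (r x : ℝ) : W r x ^ (2:ℝ) = ENNReal.ofReal ((1 + x ^ 2) ^ (-(2*r)/2)) := by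
  have h0 : (0:ℝ) ≤ 1 + x ^ 2 := by positivity
  rw [W, ENNReal.ofReal_rpow_of_nonneg (Real.rpow_nonneg (jb_pos x).le _) (by norm_num)]
  congr 1
  rw [jb, Real.sqrt_eq_rpow, ← Real.rpow_mul h0, ← Real.rpow_mul h0]
  ring_nf

lemma lintegral_W_sq_lt_top {r : ℝ} (hr : 1/2 < r) :
    ∫⁻ x : ℝ, W r x ^ (2:ℝ) < ⊤ := by
  have hint : Integrable (fun x : ℝ => ((1:ℝ) + ‖x‖ ^ 2) ^ (-(2*r)/2)) volume := by
    apply integrable_rpow_neg_one_add_norm_sq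
    have : (Module.finrank ℝ ℝ : ℝ) = 1 := by simp
    rw [this]; linarith
  simp_rw [W_sq]
  calc ∫⁻ x : ℝ, ENNReal.ofReal ((1 + x ^ 2) ^ (-(2*r)/2))
      = ∫⁻ x : ℝ, ENNReal.ofReal ((1 + ‖x‖ ^ 2) ^ (-(2*r)/2)) := by
        simp [Real.norm_eq_abs, sq_abs]
    _ ≤ ∫⁻ x : ℝ, (‖((1 + ‖x‖ ^ 2) ^ (-(2*r)/2))‖₊ : ℝ≥0∞) :=
        lintegral_mono fun x => le_of_eq (Real.enorm_eq_ofReal (Real.rpow_nonneg (by positivity) _)).symm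
    _ < ⊤ := hint.2

lemma lintegral_CS {α : Type*} [MeasurableSpace α] (μ : Measure α) {f g : α → ℝ≥0∞}
    (hf : Measurable f) (hg : Measurable g) :
    ∫⁻ a, f a * g a ∂μ ≤
      (∫⁻ a, f a ^ (2:ℝ) ∂μ) ^ (1/2:ℝ) * (∫⁻ a, g a ^ (2:ℝ) ∂μ) ^ (1/2:ℝ) := by
  have := ENNReal.lintegral_mul_le_Lp_mul_Lq μ (p := 2) (q := 2)
    ⟨by norm_num, by norm_num, by norm_num⟩ hf.aemeasurable hg.aemeasurable
  simpa using this

lemma eLp_eq (f : ℝ × ℝ → ℝ) (hf : ∀ x, 0 ≤ f x) :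
    (∫⁻ p : ℝ × ℝ, (ENNReal.ofReal (f p)) ^ (2:ℝ)) ^ (1/2:ℝ) = eLpNorm f 2 volume := by
  rw [eLpNorm_eq_lintegral_rpow_enorm_toReal (by norm_num) (by norm_num)]
  norm_num
  congr 1
  refine lintegral_congr fun p => ?_
  rw [Real.enorm_eq_ofReal (hf p)]

noncomputable def Lsec (F : ℝ × ℝ → ℝ≥0∞) (ξ : ℝ) : ℝ≥0∞ :=
  (∫⁻ τ, F (ξ, τ) ^ (2:ℝ)) ^ (1/2:ℝ)

lemma rpow_half_sq (x : ℝ≥0∞) : (x ^ (1/2:ℝ)) ^ (2:ℝ) = x := by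
  rw [← ENNReal.rpow_mul]; norm_num

lemma measurable_Lsec {F : ℝ × ℝ → ℝ≥0∞} (hF : Measurable F) : Measurable (Lsec F) :=
  ((hF.pow_const (2:ℝ)).lintegral_prod_right').pow_const _

lemma Lsec_sq {F : ℝ × ℝ → ℝ≥0∞} (ξ : ℝ) :
    Lsec F ξ ^ (2:ℝ) = ∫⁻ τ, F (ξ, τ) ^ (2:ℝ) := by
  rw [Lsec, ← ENNReal.rpow_mul]; norm_num

lemma lintegral_Lsec_sq {F : ℝ × ℝ → ℝ≥0∞} (hF : Measurable F) :
    ∫⁻ ξ, Lsec F ξ ^ (2:ℝ) = ∫⁻ p : ℝ × ℝ, F p ^ (2:ℝ) := by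
  simp_rw [Lsec_sq]
  rw [Measure.volume_eq_prod ℝ ℝ, lintegral_prod _ (hF.pow_const (2:ℝ)).aemeasurable]

lemma lintegral_CS' {α : Type*} [MeasurableSpace α] (μ : Measure α) {f g : α → ℝ≥0∞}
    (hf : Measurable f) (hg : Measurable g) :
    ∫⁻ a, f a * g a ∂μ ≤
      (∫⁻ a, f a ^ (2:ℝ) ∂μ) ^ (1/2:ℝ) * (∫⁻ a, g a ^ (2:ℝ) ∂μ) ^ (1/2:ℝ) := by
  have := ENNReal.lintegral_mul_le_Lp_mul_Lq μ (p := 2) (q := 2)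
    ⟨by norm_num, by norm_num, by norm_num⟩ hf.aemeasurable hg.aemeasurable
  simpa using this

lemma conv_CS_tau {F G : ℝ × ℝ → ℝ≥0∞} (hF : Measurable F) (hG : Measurable G)
    (ξ1 η τ : ℝ) :
    ∫⁻ τ1, F (ξ1, τ1) * G (η, τ - τ1) ≤ Lsec F ξ1 * Lsec G η := by
  have h1 : Measurable fun τ1 => F (ξ1, τ1) := hF.comp measurable_prodMk_left
  have h2 : Measurable fun τ1 => G (η, τ - τ1) :=
    hG.comp (measurable_const.prodMk (measurable_const.sub measurable_id))
  refine (lintegral_CS' volume h1 h2).trans (le_of_eq ?_)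
  rw [Lsec, Lsec]
  congr 2
  exact (Measure.measurePreserving_sub_left volume τ).lintegral_comp
    ((hG.comp (measurable_const.prodMk measurable_id)).pow_const (2:ℝ))

lemma young_step {φ B : ℝ → ℝ≥0∞} (hφ : Measurable φ) (hB : Measurable B) :
    ∫⁻ ξ, (∫⁻ ξ1, φ ξ1 * B (ξ - ξ1)) ^ (2:ℝ) ≤
      (∫⁻ x, φ x) * ((∫⁻ x, φ x) * ∫⁻ x, B x ^ (2:ℝ)) := by
  have key : ∀ ξ : ℝ, (∫⁻ ξ1, φ ξ1 * B (ξ - ξ1)) ^ (2:ℝ) ≤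
      (∫⁻ x, φ x) * ∫⁻ ξ1, φ ξ1 * B (ξ - ξ1) ^ (2:ℝ) := by
    intro ξ
    have hBm : Measurable fun ξ1 => B (ξ - ξ1) :=
      hB.comp (measurable_const.sub measurable_id)
    have split : ∀ ξ1, φ ξ1 * B (ξ - ξ1) =
        (φ ξ1 ^ (1/2:ℝ)) * (φ ξ1 ^ (1/2:ℝ) * B (ξ - ξ1)) := by
      intro ξ1
      rw [← mul_assoc, ← ENNReal.rpow_add_of_nonneg _ _ (by norm_num) (by norm_num)]
      norm_num
    calc (∫⁻ ξ1, φ ξ1 * B (ξ - ξ1)) ^ (2:ℝ)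
        = (∫⁻ ξ1, (φ ξ1 ^ (1/2:ℝ)) * (φ ξ1 ^ (1/2:ℝ) * B (ξ - ξ1))) ^ (2:ℝ) := by
          rw [lintegral_congr split]
      _ ≤ ((∫⁻ ξ1, (φ ξ1 ^ (1/2:ℝ)) ^ (2:ℝ)) ^ (1/2:ℝ) *
            (∫⁻ ξ1, (φ ξ1 ^ (1/2:ℝ) * B (ξ - ξ1)) ^ (2:ℝ)) ^ (1/2:ℝ)) ^ (2:ℝ) := by
          apply ENNReal.rpow_le_rpow _ (by norm_num)
          exact lintegral_CS' volume (hφ.pow_const _) ((hφ.pow_const _).mul hBm)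
      _ = (∫⁻ x, φ x) * ∫⁻ ξ1, φ ξ1 * B (ξ - ξ1) ^ (2:ℝ) := by
          rw [ENNReal.mul_rpow_of_nonneg _ _ (by norm_num : (0:ℝ) ≤ 2),
            rpow_half_sq, rpow_half_sq]
          congr 1
          · exact lintegral_congr fun ξ1 => rpow_half_sq _
          · refine lintegral_congr fun ξ1 => ?_
            rw [ENNReal.mul_rpow_of_nonneg _ _ (by norm_num : (0:ℝ) ≤ 2), rpow_half_sq]
  calc ∫⁻ ξ, (∫⁻ ξ1, φ ξ1 * B (ξ - ξ1)) ^ (2:ℝ)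
      ≤ ∫⁻ ξ, (∫⁻ x, φ x) * ∫⁻ ξ1, φ ξ1 * B (ξ - ξ1) ^ (2:ℝ) := lintegral_mono key
    _ = (∫⁻ x, φ x) * ∫⁻ ξ, ∫⁻ ξ1, φ ξ1 * B (ξ - ξ1) ^ (2:ℝ) := by
        refine lintegral_const_mul _ ?_
        exact (((hφ.comp measurable_snd).mul
          ((hB.comp (measurable_fst.sub measurable_snd)).pow_const _)).lintegral_prod_right')
    _ = (∫⁻ x, φ x) * ((∫⁻ x, φ x) * ∫⁻ x, B x ^ (2:ℝ)) := by
        congr 1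
        rw [lintegral_lintegral_swap]
        · calc ∫⁻ ξ1, ∫⁻ ξ, φ ξ1 * B (ξ - ξ1) ^ (2:ℝ)
              = ∫⁻ ξ1, φ ξ1 * ∫⁻ ξ, B (ξ - ξ1) ^ (2:ℝ) := by
                refine lintegral_congr fun ξ1 => ?_
                exact lintegral_const_mul _ ((hB.comp (measurable_id.sub measurable_const)).pow_const _)
            _ = ∫⁻ ξ1, φ ξ1 * ∫⁻ x, B x ^ (2:ℝ) := by
                refine lintegral_congr fun ξ1 => ?_
                congr 1
                exact lintegral_sub_right_eq_self (fun x => B x ^ (2:ℝ)) ξ1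
            _ = (∫⁻ x, φ x) * ∫⁻ x, B x ^ (2:ℝ) := lintegral_mul_const _ hφ
        · exact ((hφ.comp measurable_snd).mul
            ((hB.comp (measurable_fst.sub measurable_snd)).pow_const _)).aemeasurable

lemma rpow_sq_half (x : ℝ≥0∞) : (x ^ (2:ℝ)) ^ (1/2:ℝ) = x := by
  rw [← ENNReal.rpow_mul]; norm_num

lemma step_conv {F G : ℝ × ℝ → ℝ≥0∞} (hF : Measurable F) (hG : Measurable G)
    {w : ℝ → ℝ≥0∞} (hw : Measurable w) (p : ℝ × ℝ) :
    ∫⁻ p1 : ℝ × ℝ, (F p1 * w p1.1) * G (p - p1) ≤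
      ∫⁻ ξ1, (w ξ1 * Lsec F ξ1) * Lsec G (p.1 - ξ1) := by
  have hmeas : Measurable fun p1 : ℝ × ℝ => (F p1 * w p1.1) * G (p - p1) :=
    (hF.mul (hw.comp measurable_fst)).mul (hG.comp (measurable_const.sub measurable_id))
  rw [Measure.volume_eq_prod ℝ ℝ, lintegral_prod _ hmeas.aemeasurable]
  refine lintegral_mono fun ξ1 => ?_
  have hpt : ∀ τ1, (F (ξ1, τ1) * w ξ1) * G (p - (ξ1, τ1)) =
      w ξ1 * (F (ξ1, τ1) * G (p.1 - ξ1, p.2 - τ1)) := by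
    intro τ1
    have : p - (ξ1, τ1) = (p.1 - ξ1, p.2 - τ1) := rfl
    rw [this]; ring
  have hm2 : Measurable fun τ1 => F (ξ1, τ1) * G (p.1 - ξ1, p.2 - τ1) :=
    (hF.comp measurable_prodMk_left).mul
      (hG.comp (measurable_const.prodMk (measurable_const.sub measurable_id)))
  rw [lintegral_congr hpt, lintegral_const_mul _ hm2, mul_assoc]
  exact mul_le_mul_right (conv_CS_tau hF hG ξ1 (p.1 - ξ1) p.2) _

theorem stmt13 (s b : ℝ) (hs : 1/2 < s) (hb : 1/2 < b)
    (e : ℝ) (he : e = 1 ∨ e = -1) :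
    ∃ c > (0:ℝ), ∀ f g h : ℝ × ℝ → ℝ, Measurable f → Measurable g → Measurable h →
      (∀ x, 0 ≤ f x) → (∀ x, 0 ≤ g x) → (∀ x, 0 ≤ h x) →
      MemLp f 2 volume → MemLp g 2 volume → MemLp h 2 volume →
      (∫⁻ p : (ℝ × ℝ) × (ℝ × ℝ),
        ENNReal.ofReal (f p.1 * g p.2 * h (p.1.1 + p.2.1, p.1.2 + p.2.2) *
          jb p.1.1 ^ (-s) * jb (p.1.2 + p.2.2 + e * |p.1.1 + p.2.1|) ^ (-b)))
      ≤ ENNReal.ofReal c * eLpNorm f 2 volume * eLpNorm g 2 volume * eLpNorm h 2 volume := by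
  have hCs := lintegral_W_sq_lt_top hs
  have hCb := lintegral_W_sq_lt_top hb
  set Cs := ∫⁻ x : ℝ, W s x ^ (2:ℝ) with hCsdef
  set Cb := ∫⁻ x : ℝ, W b x ^ (2:ℝ) with hCbdef
  set CC := Cs ^ (1/2:ℝ) * Cb ^ (1/2:ℝ) with hCCdef
  have hCCtop : CC ≠ ⊤ :=
    ENNReal.mul_ne_top (ENNReal.rpow_ne_top_of_nonneg (by norm_num) hCs.ne)
      (ENNReal.rpow_ne_top_of_nonneg (by norm_num) hCb.ne)
  refine ⟨CC.toReal + 1, by positivity, ?_⟩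
  intro f g h hf hg hh hf0 hg0 hh0 _ _ _
  have hCCle : CC ≤ ENNReal.ofReal (CC.toReal + 1) :=
    calc CC = ENNReal.ofReal CC.toReal := (ENNReal.ofReal_toReal hCCtop).symm
    _ ≤ _ := ENNReal.ofReal_le_ofReal (by linarith)
  set F := fun p : ℝ × ℝ => ENNReal.ofReal (f p) with hFdef
  set G := fun p : ℝ × ℝ => ENNReal.ofReal (g p) with hGdef
  set H := fun p : ℝ × ℝ => ENNReal.ofReal (h p) with hHdef
  have hFm : Measurable F := ENNReal.measurable_ofReal.comp hf
  have hGm : Measurable G := ENNReal.measurable_ofReal.comp hg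
  have hHm : Measurable H := ENNReal.measurable_ofReal.comp hh
  set w2e := fun p : ℝ × ℝ => W b (p.2 + e * |p.1|) with hw2def
  have hw2m : Measurable w2e :=
    (measurable_W b).comp (measurable_snd.add (measurable_fst.abs.const_mul e))
  set φ := fun ξ1 : ℝ => W s ξ1 * Lsec F ξ1 with hφdef
  have hφm : Measurable φ := (measurable_W s).mul (measurable_Lsec hFm)
  set K := fun ξ : ℝ => ∫⁻ ξ1, φ ξ1 * Lsec G (ξ - ξ1) with hKdef
  have hKm : Measurable K :=
    ((hφm.comp measurable_snd).mul
      ((measurable_Lsec hGm).comp (measurable_fst.sub measurable_snd))).lintegral_prod_right'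
  set NFn := (∫⁻ p : ℝ × ℝ, F p ^ (2:ℝ)) ^ (1/2:ℝ) with hNFdef
  set NGn := (∫⁻ p : ℝ × ℝ, G p ^ (2:ℝ)) ^ (1/2:ℝ) with hNGdef
  set NHn := (∫⁻ p : ℝ × ℝ, H p ^ (2:ℝ)) ^ (1/2:ℝ) with hNHdef
  set Iφ := ∫⁻ x, φ x with hIφdef
  -- pointwise rewriting of the integrand
  have point : ∀ p : (ℝ × ℝ) × (ℝ × ℝ),
      ENNReal.ofReal (f p.1 * g p.2 * h (p.1.1 + p.2.1, p.1.2 + p.2.2) *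
          jb p.1.1 ^ (-s) * jb (p.1.2 + p.2.2 + e * |p.1.1 + p.2.1|) ^ (-b))
      = F p.1 * G p.2 * H (p.1 + p.2) * W s p.1.1 * w2e (p.1 + p.2) := by
    intro p
    have n1 : 0 ≤ f p.1 * g p.2 := mul_nonneg (hf0 _) (hg0 _)
    have n2 : 0 ≤ f p.1 * g p.2 * h (p.1.1 + p.2.1, p.1.2 + p.2.2) :=
      mul_nonneg n1 (hh0 _)
    have n3 : 0 ≤ f p.1 * g p.2 * h (p.1.1 + p.2.1, p.1.2 + p.2.2) * jb p.1.1 ^ (-s) :=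
      mul_nonneg n2 (Real.rpow_nonneg (jb_pos _).le _)
    rw [ENNReal.ofReal_mul n3, ENNReal.ofReal_mul n2, ENNReal.ofReal_mul n1,
      ENNReal.ofReal_mul (hf0 p.1)]
    rfl
  have big_meas : Measurable fun q : (ℝ × ℝ) × (ℝ × ℝ) =>
      F q.1 * G q.2 * H (q.1 + q.2) * W s q.1.1 * w2e (q.1 + q.2) :=
    ((((hFm.comp measurable_fst).mul (hGm.comp measurable_snd)).mul
      (hHm.comp (measurable_fst.add measurable_snd))).mul
      ((measurable_W s).comp (measurable_fst.comp measurable_fst))).mul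
      (hw2m.comp (measurable_fst.add measurable_snd))
  -- Step 1: iterated integral
  have step1 : (∫⁻ p : (ℝ × ℝ) × (ℝ × ℝ),
      ENNReal.ofReal (f p.1 * g p.2 * h (p.1.1 + p.2.1, p.1.2 + p.2.2) *
          jb p.1.1 ^ (-s) * jb (p.1.2 + p.2.2 + e * |p.1.1 + p.2.1|) ^ (-b)))
      = ∫⁻ p1 : ℝ × ℝ, ∫⁻ p2 : ℝ × ℝ,
          F p1 * G p2 * H (p1 + p2) * W s p1.1 * w2e (p1 + p2) := by
    rw [lintegral_congr point, Measure.volume_eq_prod (ℝ × ℝ) (ℝ × ℝ),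
      lintegral_prod _ big_meas.aemeasurable]
  -- Step 2: translation
  have step2 : ∀ p1 : ℝ × ℝ,
      (∫⁻ p2 : ℝ × ℝ, F p1 * G p2 * H (p1 + p2) * W s p1.1 * w2e (p1 + p2))
      = ∫⁻ p : ℝ × ℝ, (H p * w2e p) * ((F p1 * W s p1.1) * G (p - p1)) := by
    intro p1
    rw [← lintegral_add_left_eq_self
      (fun p => (H p * w2e p) * ((F p1 * W s p1.1) * G (p - p1))) p1]
    refine lintegral_congr fun p2 => ?_
    simp only [add_sub_cancel_left]
    ring
  -- Step 3: swap, pull out constants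
  have swap_meas : Measurable fun q : (ℝ × ℝ) × (ℝ × ℝ) =>
      (H q.2 * w2e q.2) * ((F q.1 * W s q.1.1) * G (q.2 - q.1)) :=
    (((hHm.comp measurable_snd).mul (hw2m.comp measurable_snd)).mul
      (((hFm.comp measurable_fst).mul
        ((measurable_W s).comp (measurable_fst.comp measurable_fst))).mul
        (hGm.comp (measurable_snd.sub measurable_fst))))
  have step3 : (∫⁻ p1 : ℝ × ℝ, ∫⁻ p : ℝ × ℝ,
        (H p * w2e p) * ((F p1 * W s p1.1) * G (p - p1)))
      = ∫⁻ p : ℝ × ℝ, (H p * w2e p) * ∫⁻ p1 : ℝ × ℝ, (F p1 * W s p1.1) * G (p - p1) := by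
    rw [lintegral_lintegral_swap swap_meas.aemeasurable]
    refine lintegral_congr fun p => ?_
    exact lintegral_const_mul _
      ((hFm.mul ((measurable_W s).comp measurable_fst)).mul
        (hGm.comp (measurable_const.sub measurable_id)))
  -- Step 4: inner convolution bound
  have step4 : (∫⁻ p : ℝ × ℝ, (H p * w2e p) * ∫⁻ p1 : ℝ × ℝ, (F p1 * W s p1.1) * G (p - p1))
      ≤ ∫⁻ p : ℝ × ℝ, H p * (w2e p * K p.1) := by
    refine lintegral_mono fun p => ?_
    rw [mul_assoc]
    exact mul_le_mul_right (mul_le_mul_right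
      (step_conv hFm hGm (measurable_W s) p) _) _
  -- Step 5: Cauchy-Schwarz in p
  have step5 : (∫⁻ p : ℝ × ℝ, H p * (w2e p * K p.1))
      ≤ NHn * (∫⁻ p : ℝ × ℝ, (w2e p * K p.1) ^ (2:ℝ)) ^ (1/2:ℝ) :=
    lintegral_CS' volume hHm (hw2m.mul (hKm.comp measurable_fst))
  -- Step 6: compute the weighted integral
  have step6 : (∫⁻ p : ℝ × ℝ, (w2e p * K p.1) ^ (2:ℝ)) = Cb * ∫⁻ ξ, K ξ ^ (2:ℝ) := by
    have hm : Measurable fun p : ℝ × ℝ => (w2e p * K p.1) ^ (2:ℝ) :=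
      (hw2m.mul (hKm.comp measurable_fst)).pow_const _
    rw [Measure.volume_eq_prod ℝ ℝ, lintegral_prod _ hm.aemeasurable]
    have inner : ∀ ξ : ℝ, (∫⁻ τ, (w2e (ξ, τ) * K ξ) ^ (2:ℝ)) = K ξ ^ (2:ℝ) * Cb := by
      intro ξ
      have : ∀ τ : ℝ, (w2e (ξ, τ) * K ξ) ^ (2:ℝ)
          = W b (τ + e * |ξ|) ^ (2:ℝ) * K ξ ^ (2:ℝ) := by
        intro τ
        rw [ENNReal.mul_rpow_of_nonneg _ _ (by norm_num : (0:ℝ) ≤ 2)]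
      rw [lintegral_congr this,
        lintegral_mul_const _ (show Measurable fun τ : ℝ => W b (τ + e * |ξ|) ^ (2:ℝ) from
          ((measurable_W b).comp (measurable_id.add measurable_const)).pow_const _),
        lintegral_add_right_eq_self (fun τ => W b τ ^ (2:ℝ)) (e * |ξ|), mul_comm]
    rw [lintegral_congr inner, lintegral_mul_const _ (hKm.pow_const _), mul_comm]
  -- Step 7: Young
  have step7 : (∫⁻ ξ, K ξ ^ (2:ℝ)) ≤ Iφ * (Iφ * ∫⁻ p : ℝ × ℝ, G p ^ (2:ℝ)) := by
    have := young_step hφm (measurable_Lsec hGm)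
    rw [lintegral_Lsec_sq hGm] at this
    exact this
  -- Step 8: bound Iφ
  have step8 : Iφ ≤ Cs ^ (1/2:ℝ) * NFn := by
    have := lintegral_CS' volume (measurable_W s) (measurable_Lsec hFm)
    rw [lintegral_Lsec_sq hFm] at this
    exact this
  -- Combine
  set D := CC * NFn * NGn with hDdef
  have hE : Cb * (Iφ * (Iφ * ∫⁻ p : ℝ × ℝ, G p ^ (2:ℝ))) ≤ D ^ (2:ℝ) := by
    have expand : D ^ (2:ℝ)
        = Cb * ((Cs ^ (1/2:ℝ) * NFn) * ((Cs ^ (1/2:ℝ) * NFn) * NGn ^ (2:ℝ))) := by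
      rw [hDdef, hCCdef, ENNReal.mul_rpow_of_nonneg _ _ (by norm_num : (0:ℝ) ≤ 2),
        ENNReal.mul_rpow_of_nonneg _ _ (by norm_num : (0:ℝ) ≤ 2),
        ENNReal.mul_rpow_of_nonneg _ _ (by norm_num : (0:ℝ) ≤ 2),
        rpow_half_sq, rpow_half_sq]
      have h1 : Cs = Cs ^ (1/2:ℝ) * Cs ^ (1/2:ℝ) := by
        rw [← ENNReal.rpow_add_of_nonneg _ _ (by norm_num) (by norm_num)]; norm_num
      have h2 : NFn ^ (2:ℝ) = NFn * NFn := by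
        rw [show (2:ℝ) = 1 + 1 by norm_num,
          ENNReal.rpow_add_of_nonneg _ _ (by norm_num) (by norm_num)]
        simp
      rw [h2]; nth_rewrite 1 [h1]
      ring
    rw [expand]
    have hG2 : (∫⁻ p : ℝ × ℝ, G p ^ (2:ℝ)) = NGn ^ (2:ℝ) := (rpow_half_sq _).symm
    rw [← hG2]
    exact mul_le_mul_right (mul_le_mul' step8 (mul_le_mul' step8 le_rfl)) _
  calc (∫⁻ p : (ℝ × ℝ) × (ℝ × ℝ),
      ENNReal.ofReal (f p.1 * g p.2 * h (p.1.1 + p.2.1, p.1.2 + p.2.2) *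
          jb p.1.1 ^ (-s) * jb (p.1.2 + p.2.2 + e * |p.1.1 + p.2.1|) ^ (-b)))
      = ∫⁻ p : ℝ × ℝ, (H p * w2e p) * ∫⁻ p1 : ℝ × ℝ, (F p1 * W s p1.1) * G (p - p1) := by
        rw [step1, lintegral_congr step2, step3]
    _ ≤ ∫⁻ p : ℝ × ℝ, H p * (w2e p * K p.1) := step4
    _ ≤ NHn * (∫⁻ p : ℝ × ℝ, (w2e p * K p.1) ^ (2:ℝ)) ^ (1/2:ℝ) := step5
    _ ≤ NHn * (D ^ (2:ℝ)) ^ (1/2:ℝ) := by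
        refine mul_le_mul_right (ENNReal.rpow_le_rpow ?_ (by norm_num)) _
        rw [step6]
        exact le_trans (mul_le_mul_right step7 _) hE
    _ = NHn * D := by rw [rpow_sq_half]
    _ = CC * (NFn * (NGn * NHn)) := by rw [hDdef]; ring
    _ ≤ ENNReal.ofReal (CC.toReal + 1) * (NFn * (NGn * NHn)) :=
        mul_le_mul_left hCCle _
    _ = ENNReal.ofReal (CC.toReal + 1) * eLpNorm f 2 volume * eLpNorm g 2 volume *
        eLpNorm h 2 volume := by
        rw [hNFdef, hNGdef, hNHdef, eLp_eq f hf0, eLp_eq g hg0, eLp_eq h hh0]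
        ring
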